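/- Let G be a finite graph such that λI − A_G + (1/2)J is positive semidefinite, and suppose G has at least two connected components. If one component C₁ satisfies λ₁(C₁) > λ, then every other component C_i satisfies λ₁(C_i) < λ. -/

import Mathlib

open Matrix SimpleGraph Finset
open scoped Classical RealInnerProductSpace

noncomputable section

/-- The adjacency matrix of a graph is Hermitian (real symmetric). -/
lemma adjHerm {V : Type} [Fintype V] [DecidableEq V] (G : SimpleGraph V) :
    (G.adjMatrix ℝ).IsHermitian := by
  have h := G.isSymm_adjMatrix (α := ℝ)
  simpa [Matrix.IsHermitian, Matrix.conjTranspose_eq_transpose_of_trivial] using h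

/-- The spectral radius (largest adjacency eigenvalue) `λ₁(G)` of a graph. -/
def specRad {V : Type} [Fintype V] [DecidableEq V] (G : SimpleGraph V) : ℝ :=
  ⨆ i, (adjHerm G).eigenvalues i

/-- The `j`-th largest adjacency eigenvalue of `G` (1-indexed, with multiplicity):
entry `card V - j` of the increasingly sorted list of eigenvalues. -/
def nthEig {V : Type} [Fintype V] [DecidableEq V] (G : SimpleGraph V) (j : ℕ) : ℝ :=
  (Multiset.sort (Finset.univ.val.map (adjHerm G).eigenvalues) (· ≤ ·)).getD
    (Fintype.card V - j) 0

/-- The multiplicity of `μ` as an adjacency eigenvalue of `G`. -/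
def eigMult {V : Type} [Fintype V] [DecidableEq V] (G : SimpleGraph V) (μ : ℝ) : ℕ :=
  Module.finrank ℝ (Module.End.eigenspace (Matrix.toLin' (G.adjMatrix ℝ)) μ)

/-- The ball of radius `r` around `v`: all vertices at graph distance at most `r` from `v`. -/
def ball {V : Type} (G : SimpleGraph V) (v : V) (r : ℕ) : Set V := {u | G.dist v u ≤ r}

/-- If `λI - A_G + (1/2)J` is positive semidefinite and one connected component `C₁`
satisfies `λ₁(C₁) > λ`, then every other component `C` satisfies `λ₁(C) < λ`. -/
lemma sum_supp_aux {V : Type} [Fintype V] (s : Set V) [Fintype s] (f : V → ℝ)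
    (hf : ∀ v, v ∉ s → f v = 0) : ∑ v, f v = ∑ w : s, f ↑w := by
  classical
  rw [Finset.sum_set_coe (f := f) (s := s)]
  exact (Finset.sum_subset (Finset.subset_univ _)
    (fun x _ hx => hf x (by simpa using hx))).symm

lemma exists_test {V : Type} [Fintype V] [DecidableEq V] (G : SimpleGraph V)
    (c : G.ConnectedComponent) :
    ∃ x : V → ℝ, (∀ v, 0 ≤ x v) ∧ (∀ v, x v ≠ 0 → v ∈ c.supp) ∧ (∃ v, x v ≠ 0) ∧
      specRad (G.induce c.supp) * (x ⬝ᵥ x) ≤ x ⬝ᵥ (G.adjMatrix ℝ *ᵥ x) := by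
  classical
  set H := G.induce c.supp with hH
  have hne : Nonempty ↥c.supp := by
    obtain ⟨v, hv⟩ := Quot.exists_rep c
    exact ⟨⟨v, by rw [ConnectedComponent.mem_supp_iff]; exact hv⟩⟩
  have hherm := adjHerm H
  obtain ⟨i₀, hi₀⟩ := Finite.exists_max hherm.eigenvalues
  have hspec : specRad H = hherm.eigenvalues i₀ :=
    le_antisymm (ciSup_le hi₀) (le_ciSup (Set.Finite.bddAbove (Set.finite_range _)) i₀)
  set u : ↥c.supp → ℝ := ⇑(hherm.eigenvectorBasis i₀) with hu
  have huvec : H.adjMatrix ℝ *ᵥ u = hherm.eigenvalues i₀ • u :=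
    hherm.mulVec_eigenvectorBasis i₀
  have hune : ∃ w, u w ≠ 0 := by
    by_contra h
    push_neg at h
    exact hherm.eigenvectorBasis.orthonormal.ne_zero i₀ (by ext w; exact h w)
  set x : V → ℝ := fun v => if h : v ∈ c.supp then |u ⟨v, h⟩| else 0 with hx
  have hxzero : ∀ v, v ∉ c.supp → x v = 0 := by
    intro v hv; simp only [hx]; rw [dif_neg hv]
  have hxw : ∀ w : ↥c.supp, x ↑w = |u w| := by
    intro w; simp only [hx]; rw [dif_pos w.2]
  refine ⟨x, ?_, ?_, ?_, ?_⟩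
  · intro v; simp only [hx]; split <;> positivity
  · intro v hv; by_contra h; exact hv (hxzero v h)
  · obtain ⟨w, hw⟩ := hune
    exact ⟨↑w, by rw [hxw w]; exact abs_ne_zero.mpr hw⟩
  have hxx : x ⬝ᵥ x = u ⬝ᵥ u := by
    rw [dotProduct, sum_supp_aux c.supp _ (fun v hv => by rw [hxzero v hv, mul_zero])]
    rw [dotProduct]
    exact Finset.sum_congr rfl fun w _ => by rw [hxw w, ← abs_mul, abs_mul_self]
  have hAxw : ∀ w : ↥c.supp,
      (G.adjMatrix ℝ *ᵥ x) ↑w = (H.adjMatrix ℝ *ᵥ (fun z => |u z|)) w := by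
    intro w
    rw [mulVec, dotProduct, sum_supp_aux c.supp _
      (fun v hv => by rw [hxzero v hv, mul_zero])]
    rw [mulVec, dotProduct]
    refine Finset.sum_congr rfl fun z _ => ?_
    rw [hxw z]
    congr 1
  have hmain : x ⬝ᵥ (G.adjMatrix ℝ *ᵥ x)
      = (fun z => |u z|) ⬝ᵥ (H.adjMatrix ℝ *ᵥ (fun z => |u z|)) := by
    rw [dotProduct, sum_supp_aux c.supp _ (fun v hv => by rw [hxzero v hv, zero_mul])]
    rw [dotProduct]
    exact Finset.sum_congr rfl fun w _ => by rw [hxw w, hAxw w]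
  rw [hmain, hxx, hspec]
  have hterm : ∀ w z : ↥c.supp, (H.adjMatrix ℝ) w z * (u w * u z)
      ≤ (H.adjMatrix ℝ) w z * (|u w| * |u z|) := by
    intro w z
    apply mul_le_mul_of_nonneg_left _ (by simp [SimpleGraph.adjMatrix_apply]; split <;> norm_num)
    rw [← abs_mul]
    exact le_abs_self _
  calc hherm.eigenvalues i₀ * (u ⬝ᵥ u) = u ⬝ᵥ (H.adjMatrix ℝ *ᵥ u) := by
        rw [huvec, dotProduct_smul, smul_eq_mul]
    _ ≤ (fun z => |u z|) ⬝ᵥ (H.adjMatrix ℝ *ᵥ (fun z => |u z|)) := by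
        simp only [dotProduct, mulVec, Finset.mul_sum]
        apply Finset.sum_le_sum
        intro w _
        apply Finset.sum_le_sum
        intro z _
        calc u w * ((H.adjMatrix ℝ) w z * u z) = (H.adjMatrix ℝ) w z * (u w * u z) := by ring
          _ ≤ (H.adjMatrix ℝ) w z * (|u w| * |u z|) := hterm w z
          _ = |u w| * ((H.adjMatrix ℝ) w z * |u z|) := by ring

theorem stmt10 {V : Type} [Fintype V] [DecidableEq V] (G : SimpleGraph V) (l : ℝ)
    (hpsd : (l • (1 : Matrix V V ℝ) - G.adjMatrix ℝ
        + (1 / 2 : ℝ) • (Matrix.of fun _ _ => (1 : ℝ))).PosSemidef)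
    (c₁ c₂ : G.ConnectedComponent) (hne : c₁ ≠ c₂)
    (h1 : l < specRad (G.induce c₁.supp)) :
    specRad (G.induce c₂.supp) < l := by
  classical
  by_contra hcon
  push_neg at hcon
  obtain ⟨a, ha0, hasupp, ⟨v₁, hv₁⟩, haA⟩ := exists_test G c₁
  obtain ⟨b, hb0, hbsupp, ⟨v₂, hv₂⟩, hbA⟩ := exists_test G c₂
  set A := G.adjMatrix ℝ with hA
  have hA0 : ∀ v z, a v ≠ 0 → b z ≠ 0 → A v z = 0 := by
    intro v z hav hbz
    have h1' := hasupp v hav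
    have h2' := hbsupp z hbz
    rw [ConnectedComponent.mem_supp_iff] at h1' h2'
    have hnadj : ¬ G.Adj v z := by
      intro hadj
      exact hne (by rw [← h1', ← h2']; exact ConnectedComponent.sound hadj.reachable)
    rw [hA, SimpleGraph.adjMatrix_apply, if_neg hnadj]
  have horth : a ⬝ᵥ b = 0 := by
    rw [dotProduct]
    apply Finset.sum_eq_zero
    intro v _
    by_cases hav : a v = 0
    · rw [hav, zero_mul]
    by_cases hbv : b v = 0
    · rw [hbv, mul_zero]
    have h1' := hasupp v hav
    have h2' := hbsupp v hbv
    rw [ConnectedComponent.mem_supp_iff] at h1' h2'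
    exact absurd (h1'.symm.trans h2') hne
  have haAb : a ⬝ᵥ (A *ᵥ b) = 0 := by
    rw [dotProduct]
    apply Finset.sum_eq_zero
    intro v _
    by_cases hav : a v = 0
    · rw [hav, zero_mul]
    rw [mulVec, dotProduct, Finset.sum_eq_zero, mul_zero]
    intro z _
    by_cases hbz : b z = 0
    · rw [hbz, mul_zero]
    rw [hA0 v z hav hbz, zero_mul]
  have hbAa : b ⬝ᵥ (A *ᵥ a) = 0 := by
    rw [dotProduct]
    apply Finset.sum_eq_zero
    intro v _
    by_cases hbv : b v = 0
    · rw [hbv, zero_mul]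
    rw [mulVec, dotProduct, Finset.sum_eq_zero, mul_zero]
    intro z _
    by_cases haz : a z = 0
    · rw [haz, mul_zero]
    have : A z v = 0 := hA0 z v haz hbv
    have hsym : A v z = 0 := by
      rw [hA] at this ⊢
      rw [SimpleGraph.adjMatrix_apply] at this ⊢
      rw [if_neg]
      intro h
      rw [if_pos h.symm] at this
      exact one_ne_zero this
    rw [hsym, zero_mul]
  set s := ∑ v, a v with hs_def
  set t := ∑ v, b v with ht_def
  have hs : 0 < s :=
    Finset.sum_pos' (fun i _ => ha0 i) ⟨v₁, Finset.mem_univ _, (ha0 v₁).lt_of_ne (Ne.symm hv₁)⟩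
  have ht : 0 < t :=
    Finset.sum_pos' (fun i _ => hb0 i) ⟨v₂, Finset.mem_univ _, (hb0 v₂).lt_of_ne (Ne.symm hv₂)⟩
  have hna : 0 < a ⬝ᵥ a := by
    rw [dotProduct]
    exact Finset.sum_pos' (fun i _ => mul_self_nonneg (a i))
      ⟨v₁, Finset.mem_univ _, mul_self_pos.mpr hv₁⟩
  have hnb : 0 < b ⬝ᵥ b := by
    rw [dotProduct]
    exact Finset.sum_pos' (fun i _ => mul_self_nonneg (b i))
      ⟨v₂, Finset.mem_univ _, mul_self_pos.mpr hv₂⟩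
  set w : V → ℝ := t • a - s • b with hw
  have hsum : ∑ v, w v = 0 := by
    simp only [hw, Pi.sub_apply, Pi.smul_apply, smul_eq_mul]
    rw [Finset.sum_sub_distrib, ← Finset.mul_sum, ← Finset.mul_sum, ← hs_def, ← ht_def]
    ring
  have hq := hpsd.dotProduct_mulVec_nonneg w
  have hstar : star w = w := funext fun v => star_trivial _
  rw [hstar] at hq
  have hJw : ((Matrix.of fun _ _ => (1 : ℝ)) : Matrix V V ℝ) *ᵥ w = 0 := by
    funext i
    simp only [mulVec, dotProduct, Matrix.of_apply, one_mul, Pi.zero_apply]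
    exact hsum
  have hMw : (l • (1 : Matrix V V ℝ) - A + (1 / 2 : ℝ) • (Matrix.of fun _ _ => (1 : ℝ))) *ᵥ w
      = l • w - A *ᵥ w := by
    rw [add_mulVec, sub_mulVec, smul_mulVec, one_mulVec, smul_mulVec, hJw,
      smul_zero, add_zero]
  rw [hMw] at hq
  have hAw : A *ᵥ w = t • (A *ᵥ a) - s • (A *ᵥ b) := by
    rw [hw, mulVec_sub, mulVec_smul, mulVec_smul]
  have hba : b ⬝ᵥ a = 0 := by rw [dotProduct_comm]; exact horth
  have hww : w ⬝ᵥ w = t ^ 2 * (a ⬝ᵥ a) + s ^ 2 * (b ⬝ᵥ b) := by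
    rw [hw]
    simp only [sub_dotProduct, dotProduct_sub, smul_dotProduct, dotProduct_smul,
      smul_eq_mul, horth, hba]
    ring
  have hwAw : w ⬝ᵥ (A *ᵥ w) = t ^ 2 * (a ⬝ᵥ (A *ᵥ a)) + s ^ 2 * (b ⬝ᵥ (A *ᵥ b)) := by
    rw [hAw, hw]
    simp only [sub_dotProduct, dotProduct_sub, smul_dotProduct, dotProduct_smul,
      smul_eq_mul, haAb, hbAa]
    ring
  have hq' : 0 ≤ l * (t ^ 2 * (a ⬝ᵥ a) + s ^ 2 * (b ⬝ᵥ b))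
      - (t ^ 2 * (a ⬝ᵥ (A *ᵥ a)) + s ^ 2 * (b ⬝ᵥ (A *ᵥ b))) := by
    calc (0 : ℝ) ≤ w ⬝ᵥ (l • w - A *ᵥ w) := hq
      _ = l * (w ⬝ᵥ w) - w ⬝ᵥ (A *ᵥ w) := by
          rw [dotProduct_sub, dotProduct_smul, smul_eq_mul]
      _ = _ := by rw [hww, hwAw]
  have e1 : t ^ 2 * (specRad (G.induce c₁.supp) * (a ⬝ᵥ a)) ≤ t ^ 2 * (a ⬝ᵥ (A *ᵥ a)) :=
    mul_le_mul_of_nonneg_left haA (sq_nonneg t)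
  have e2 : s ^ 2 * (specRad (G.induce c₂.supp) * (b ⬝ᵥ b)) ≤ s ^ 2 * (b ⬝ᵥ (A *ᵥ b)) :=
    mul_le_mul_of_nonneg_left hbA (sq_nonneg s)
  have e3 : l * (t ^ 2 * (a ⬝ᵥ a)) < specRad (G.induce c₁.supp) * (t ^ 2 * (a ⬝ᵥ a)) :=
    mul_lt_mul_of_pos_right h1 (mul_pos (pow_pos ht 2) hna)
  have e4 : l * (s ^ 2 * (b ⬝ᵥ b)) ≤ specRad (G.induce c₂.supp) * (s ^ 2 * (b ⬝ᵥ b)) :=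
    mul_le_mul_of_nonneg_right hcon (le_of_lt (mul_pos (pow_pos hs 2) hnb))
  nlinarith [e1, e2, e3, e4, hq']

end
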